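/- Let β₀ ∈ R^p with A₀ = supp(β₀), and let β̌ ∈ R^p satisfy (i) β̌_j = 0 for all j ∉ A₀ and (ii) η := sup_{j∈A₀} |β̌_j − β₀_j|/|β₀_j| < 1. Let M₁ > 0 and r > 0, and assume inf_{j∈A₀}|β₀_j| > M₁/(r(1 − η)). Then for every u ∈ R^p and every δ ∈ R^p with ‖δ‖_∞ ≤ M₁, V(δ; β̌, u) = V(δ; β₀, u). -/
import Mathlib


open Matrix

/-- The localized Lasso criterion
`V(δ; b, u) = (n/(2r²)) δᵀCδ − (n/r) δᵀu + nλ Σ_j w_j(|b_j + δ_j/r| − |b_j|)`,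
where `C = XᵀX/n`. -/
noncomputable def Vfun {n p : ℕ} (X : Matrix (Fin n) (Fin p) ℝ) (w : Fin p → ℝ)
    (lam r : ℝ) (b u δ : Fin p → ℝ) : ℝ :=
  (n / (2 * r ^ 2)) * dotProduct δ (((n : ℝ)⁻¹ • (Xᵀ * X)).mulVec δ)
    - (n / r) * dotProduct δ u
    + n * lam * ∑ j, w j * (|b j + δ j / r| - |b j|)

/-- If `β̌` vanishes off `A₀ = supp(β₀)`, agrees with `β₀` up to relative error `η < 1`
on `A₀`, and the beta-min condition `inf_{A₀}|β₀_j| > M₁/(r(1 − η))` holds, then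
`V(δ; β̌, u) = V(δ; β₀, u)` for all `u` and all `δ` with `‖δ‖_∞ ≤ M₁`. -/
theorem V_eq_of_thresholded {n p : ℕ}
    (X : Matrix (Fin n) (Fin p) ℝ) (w : Fin p → ℝ) (hw : ∀ j, 0 < w j)
    (lam : ℝ) (hlam : 0 < lam) (r : ℝ) (hr : 0 < r)
    (β₀ βc : Fin p → ℝ)
    (hsupp : ∀ j, β₀ j = 0 → βc j = 0)
    (η : ℝ) (hη0 : 0 ≤ η) (hη1 : η < 1)
    (hη : ∀ j, β₀ j ≠ 0 → |βc j - β₀ j| ≤ η * |β₀ j|)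
    (M₁ : ℝ) (hM₁ : 0 < M₁)
    (hbetamin : ∀ j, β₀ j ≠ 0 → M₁ / (r * (1 - η)) < |β₀ j|) :
    ∀ (u δ : Fin p → ℝ), (∀ j, |δ j| ≤ M₁) →
      Vfun X w lam r βc u δ = Vfun X w lam r β₀ u δ := by
  intro u δ hδ
  unfold Vfun
  congr 1
  congr 1
  apply Finset.sum_congr rfl
  intro j _
  by_cases h0 : β₀ j = 0
  · rw [h0, hsupp j h0]
  · have hb := hbetamin j h0
    have hηj := hη j h0
    have habs : 0 < |β₀ j| := abs_pos.mpr h0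
    have h1η : 0 < 1 - η := by linarith
    have hb' : M₁ < |β₀ j| * (r * (1 - η)) := (div_lt_iff₀ (mul_pos hr h1η)).mp hb
    have hM1r : M₁ / r < (1 - η) * |β₀ j| := by
      rw [div_lt_iff₀ hr]
      nlinarith
    have hδr : |δ j / r| ≤ M₁ / r := by
      rw [abs_div, abs_of_pos hr]
      exact div_le_div_of_nonneg_right (hδ j) hr.le
    -- same sign
    have hsign : (0 < βc j ↔ 0 < β₀ j) := by
      constructor <;> intro hpos <;> by_contra hneg <;> push_neg at hneg
      · have h2 : |β₀ j| = -β₀ j := abs_of_nonpos hneg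
        have := abs_le.mp hηj
        rw [h2] at this
        nlinarith
      · have h2 : |β₀ j| = β₀ j := abs_of_pos hpos
        have := abs_le.mp hηj
        rw [h2] at this
        nlinarith
    have hbc : |δ j / r| < |βc j| := by
      have h2 : (1 - η) * |β₀ j| ≤ |βc j| := by
        have := abs_sub_abs_le_abs_sub (β₀ j) (βc j)
        rw [abs_sub_comm] at this
        nlinarith
      linarith
    have hb0 : |δ j / r| < |β₀ j| := by nlinarith
    have key : ∀ b : ℝ, |δ j / r| < |b| →
        |b + δ j / r| - |b| = if 0 < b then δ j / r else -(δ j / r) := by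
      intro b hle
      have hb : b ≠ 0 := by
        intro hz; rw [hz, abs_zero] at hle; linarith [abs_nonneg (δ j / r)]
      have hab := abs_lt.mp hle
      rcases hb.lt_or_gt with h1 | h1
      · rw [if_neg (not_lt.mpr h1.le), abs_of_neg h1] at *
        rw [abs_of_nonpos (by linarith [hab.2] : b + δ j / r ≤ 0)]
        ring
      · rw [if_pos h1, abs_of_pos h1] at *
        rw [abs_of_pos (by linarith [hab.1] : 0 < b + δ j / r)]
        ring
    rw [key _ hbc, key _ hb0]
    by_cases hp : 0 < β₀ j
    · rw [if_pos hp, if_pos (hsign.mpr hp)]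
    · rw [if_neg hp, if_neg (fun h => hp (hsign.mp h))]
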